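/- Let d ≥ 1, κ > 0, ε > 0, and let T > 0 be the unique time with sinh(κT) = εκ/4, i.e. T = (1/κ)·log( εκ/4 + √(ε²κ²/16 + 1) ). Let 𝔪 be the centered Gaussian measure on ℝ^d with covariance κ^{-1}·Id (density (κ/(2π))^{d/2} e^{−κ|x|²/2} with respect to Lebesgue measure), and let R_T be the measure on ℝ^d × ℝ^d with density p_T(x,y) = (1 − e^{−2κT})^{−d/2} · exp( −κ·(|x|² − 2e^{κT} x·y + |y|²) / (2(e^{2κT} − 1)) ) with respect to 𝔪 ⊗ 𝔪. Then for all probability measures μ, ν on ℝ^d with finite second moments and H(μ|𝔪), H(ν|𝔪) < ∞, and for every coupling π ∈ Π(μ,ν) with H(π | μ⊗ν) < ∞, it holds that ∫ |x−y|² dπ + ε·H(π | μ⊗ν) = ε·H(π | R_T) − ε·H(μ|𝔪) − ε·H(ν|𝔪) − (dε/2)·log(1 − e^{−2κT}) + (1 − e^{−κT})·(M₂(μ) + M₂(ν)). -/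

import Mathlib

open MeasureTheory ENNReal

/-- The centered Gaussian measure on `ℝ^d` with covariance `κ⁻¹·Id`, i.e. the
invariant measure of the Ornstein–Uhlenbeck process, with density
`(κ/(2π))^{d/2} e^{-κ|x|²/2}` with respect to Lebesgue measure. -/
noncomputable def ouInvariantMeasure (d : ℕ) (κ : ℝ) :
    Measure (EuclideanSpace ℝ (Fin d)) :=
  (volume : Measure (EuclideanSpace ℝ (Fin d))).withDensity
    fun x => ENNReal.ofReal
      ((κ / (2 * Real.pi)) ^ ((d : ℝ) / 2) * Real.exp (-κ * ‖x‖ ^ 2 / 2))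

/-- The joint law `R_{0,T}` at times `0` and `T` of the stationary
Ornstein–Uhlenbeck process, given by the transition kernel
`p_T(x,y) = (1-e^{-2κT})^{-d/2} exp(-κ(|x|² - 2e^{κT} x·y + |y|²)/(2(e^{2κT}-1)))`
with respect to `𝔪 ⊗ 𝔪`. -/
noncomputable def ouRefMeasure (d : ℕ) (κ T : ℝ) :
    Measure (EuclideanSpace ℝ (Fin d) × EuclideanSpace ℝ (Fin d)) :=
  ((ouInvariantMeasure d κ).prod (ouInvariantMeasure d κ)).withDensity
    fun z => ENNReal.ofReal
      ((1 - Real.exp (-2 * κ * T)) ^ (-(d : ℝ) / 2) *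
        Real.exp (-κ * (‖z.1‖ ^ 2 - 2 * Real.exp (κ * T) * (inner ℝ z.1 z.2 : ℝ) + ‖z.2‖ ^ 2)
          / (2 * (Real.exp (2 * κ * T) - 1))))

/-- Product of `withDensity` measures is `withDensity` of the product. -/
lemma aux_withDensity_prod {α β : Type*} [MeasurableSpace α] [MeasurableSpace β]
    (μ : Measure α) (ν : Measure β) [SigmaFinite μ] [SigmaFinite ν]
    {f : α → ℝ≥0∞} {g : β → ℝ≥0∞} (hf : Measurable f) (hg : Measurable g)
    (hf' : ∀ᵐ x ∂μ, f x ≠ ⊤) (hg' : ∀ᵐ y ∂ν, g y ≠ ⊤) :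
    (μ.withDensity f).prod (ν.withDensity g)
      = (μ.prod ν).withDensity (fun z => f z.1 * g z.2) := by
  haveI := SigmaFinite.withDensity_of_ne_top hf'
  haveI := SigmaFinite.withDensity_of_ne_top hg'
  refine Measure.prod_eq fun s t hs ht => ?_
  rw [withDensity_apply _ (hs.prod ht), withDensity_apply _ hs, withDensity_apply _ ht,
    ← Measure.prod_restrict s t, lintegral_prod_mul hf.aemeasurable hg.aemeasurable]

set_option maxHeartbeats 1000000 in
/-- identity linking quadratic entropic optimal transport on `ℝ^d`
with regularization `ε` and the Schrödinger problem with Ornstein–Uhlenbeck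
reference measure `R_{0,T}`, where `sinh(κT) = εκ/4`:
`∫ |x-y|² dπ + ε·H(π|μ⊗ν) = ε·H(π|R_T) - ε·H(μ|𝔪) - ε·H(ν|𝔪)
  - (dε/2)·log(1-e^{-2κT}) + (1-e^{-κT})·(M₂(μ) + M₂(ν))`. -/
theorem eot_ou_schroedinger_identity
    (d : ℕ) (hd : 1 ≤ d) (κ ε T : ℝ) (hκ : 0 < κ) (hε : 0 < ε) (hT0 : 0 < T)
    (hT : T = (1 / κ) * Real.log (ε * κ / 4 + Real.sqrt (ε ^ 2 * κ ^ 2 / 16 + 1)))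
    (μ ν : Measure (EuclideanSpace ℝ (Fin d)))
    [IsProbabilityMeasure μ] [IsProbabilityMeasure ν]
    (hμ2 : Integrable (fun x => ‖x‖ ^ 2) μ)
    (hν2 : Integrable (fun x => ‖x‖ ^ 2) ν)
    (hμac : μ ≪ ouInvariantMeasure d κ) (hνac : ν ≪ ouInvariantMeasure d κ)
    (hμent : Integrable (fun x => Real.log ((μ.rnDeriv (ouInvariantMeasure d κ) x).toReal)) μ)
    (hνent : Integrable (fun y => Real.log ((ν.rnDeriv (ouInvariantMeasure d κ) y).toReal)) ν)
    (π : Measure (EuclideanSpace ℝ (Fin d) × EuclideanSpace ℝ (Fin d)))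
    [IsProbabilityMeasure π]
    (hπ1 : π.map Prod.fst = μ) (hπ2 : π.map Prod.snd = ν)
    (hπac : π ≪ μ.prod ν)
    (hπent : Integrable (fun z => Real.log ((π.rnDeriv (μ.prod ν) z).toReal)) π) :
    (∫ z, ‖z.1 - z.2‖ ^ 2 ∂π)
        + ε * (∫ z, Real.log ((π.rnDeriv (μ.prod ν) z).toReal) ∂π)
      = ε * (∫ z, Real.log ((π.rnDeriv (ouRefMeasure d κ T) z).toReal) ∂π)
        - ε * (∫ x, Real.log ((μ.rnDeriv (ouInvariantMeasure d κ) x).toReal) ∂μ)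
        - ε * (∫ y, Real.log ((ν.rnDeriv (ouInvariantMeasure d κ) y).toReal) ∂ν)
        - ((d : ℝ) * ε / 2) * Real.log (1 - Real.exp (-2 * κ * T))
        + (1 - Real.exp (-κ * T)) * ((∫ x, ‖x‖ ^ 2 ∂μ) + ∫ y, ‖y‖ ^ 2 ∂ν) := by
  -- notation
  set m : Measure (EuclideanSpace ℝ (Fin d)) := ouInvariantMeasure d κ with hm
  set R : Measure (EuclideanSpace ℝ (Fin d) × EuclideanSpace ℝ (Fin d)) :=
    ouRefMeasure d κ T with hRdef
  set s : ℝ := Real.exp (κ * T) with hs_def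
  have hκT : 0 < κ * T := mul_pos hκ hT0
  have hs1 : (1:ℝ) < s := by
    rw [hs_def, show (1:ℝ) = Real.exp 0 from Real.exp_zero.symm]
    exact Real.exp_lt_exp.mpr hκT
  have hs0 : (0:ℝ) < s := lt_trans one_pos hs1
  -- scalar identities coming from sinh(κT) = εκ/4
  have ha : (0:ℝ) < ε * κ / 4 + Real.sqrt (ε ^ 2 * κ ^ 2 / 16 + 1) := by positivity
  have hκT' : κ * T = Real.log (ε * κ / 4 + Real.sqrt (ε ^ 2 * κ ^ 2 / 16 + 1)) := by
    rw [hT]; field_simp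
  have hse : s = ε * κ / 4 + Real.sqrt (ε ^ 2 * κ ^ 2 / 16 + 1) := by
    rw [hs_def, hκT', Real.exp_log ha]
  have hb2 : (Real.sqrt (ε ^ 2 * κ ^ 2 / 16 + 1)) ^ 2 = ε ^ 2 * κ ^ 2 / 16 + 1 :=
    Real.sq_sqrt (by positivity)
  have hsinv : s⁻¹ = Real.sqrt (ε ^ 2 * κ ^ 2 / 16 + 1) - ε * κ / 4 := by
    refine inv_eq_of_mul_eq_one_right ?_
    rw [hse]; nlinarith [hb2]
  have hεκ : ε * κ = 2 * (s - s⁻¹) := by rw [hsinv, hse]; ring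
  have hss : s * s⁻¹ = 1 := mul_inv_cancel₀ (ne_of_gt hs0)
  have hs21 : s ^ 2 - 1 ≠ 0 := by nlinarith
  have hc : ε * κ / (2 * (s ^ 2 - 1)) = s⁻¹ := by
    rw [div_eq_iff (by simpa using hs21 : (2:ℝ) * (s ^ 2 - 1) ≠ 0)]
    linear_combination hεκ - 2 * s * hss
  have he1 : Real.exp (-κ * T) = s⁻¹ := by
    rw [show -κ * T = -(κ * T) by ring, Real.exp_neg, ← hs_def]
  have he2 : Real.exp (-2 * κ * T) = (s ^ 2)⁻¹ := by
    rw [show -2 * κ * T = -(κ * T + κ * T) by ring, Real.exp_neg, Real.exp_add, ← hs_def, ← sq]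
  have he3 : Real.exp (2 * κ * T) = s ^ 2 := by
    rw [show 2 * κ * T = κ * T + κ * T by ring, Real.exp_add, ← hs_def, ← sq]
  have hL : 0 < 1 - Real.exp (-2 * κ * T) := by
    rw [he2]
    have h2 : (1:ℝ) < s ^ 2 := by nlinarith
    have h3 : (s ^ 2)⁻¹ < 1 := inv_lt_one_of_one_lt₀ h2
    linarith
  -- the density of R with respect to m ⊗ m
  set p : EuclideanSpace ℝ (Fin d) × EuclideanSpace ℝ (Fin d) → ℝ := fun z =>
    (1 - Real.exp (-2 * κ * T)) ^ (-(d : ℝ) / 2) *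
      Real.exp (-κ * (‖z.1‖ ^ 2 - 2 * Real.exp (κ * T) * (inner ℝ z.1 z.2 : ℝ) + ‖z.2‖ ^ 2)
        / (2 * (Real.exp (2 * κ * T) - 1))) with hp_def
  have hR : R = (m.prod m).withDensity (fun z => ENNReal.ofReal (p z)) := rfl
  have hp_pos : ∀ z, 0 < p z := fun z =>
    mul_pos (Real.rpow_pos_of_pos hL _) (Real.exp_pos _)
  have hp_cont : Continuous p := by
    rw [hp_def]
    have h1 : Continuous (fun z : EuclideanSpace ℝ (Fin d) × EuclideanSpace ℝ (Fin d) =>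
      (inner ℝ z.1 z.2 : ℝ)) := continuous_inner
    have h2 : Continuous (fun z : EuclideanSpace ℝ (Fin d) × EuclideanSpace ℝ (Fin d) =>
      ‖z.1‖ ^ 2) := continuous_fst.norm.pow 2
    have h3 : Continuous (fun z : EuclideanSpace ℝ (Fin d) × EuclideanSpace ℝ (Fin d) =>
      ‖z.2‖ ^ 2) := continuous_snd.norm.pow 2
    exact continuous_const.mul (Real.continuous_exp.comp
      (((continuous_const.mul ((h2.sub (continuous_const.mul h1)).add h3)).div_const _)))
  have hp_meas : Measurable p := hp_cont.measurable
  have hPm : Measurable fun z => ENNReal.ofReal (p z) := hp_meas.ennreal_ofReal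
  -- instances
  haveI : SigmaFinite m := by unfold m; unfold ouInvariantMeasure; infer_instance
  haveI : SigmaFinite R := by
    rw [hR]; exact SigmaFinite.withDensity_of_ne_top' fun z => ENNReal.ofReal_ne_top
  -- density functions
  have hfm : Measurable (μ.rnDeriv m) := Measure.measurable_rnDeriv μ m
  have hgm : Measurable (ν.rnDeriv m) := Measure.measurable_rnDeriv ν m
  have hFm : Measurable fun z :
      EuclideanSpace ℝ (Fin d) × EuclideanSpace ℝ (Fin d) =>
      μ.rnDeriv m z.1 * ν.rnDeriv m z.2 :=
    (hfm.comp measurable_fst).mul (hgm.comp measurable_snd)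
  have hprodeq : μ.prod ν = (m.prod m).withDensity
      (fun z => μ.rnDeriv m z.1 * ν.rnDeriv m z.2) := by
    conv_lhs => rw [← Measure.withDensity_rnDeriv_eq μ m hμac,
      ← Measure.withDensity_rnDeriv_eq ν m hνac]
    exact aux_withDensity_prod m m hfm hgm (Measure.rnDeriv_ne_top μ m) (Measure.rnDeriv_ne_top ν m)
  have hm2' : m.prod m = R.withDensity (fun z => ENNReal.ofReal (p z))⁻¹ := by
    rw [hR]
    exact (withDensity_inv_same hPm
      (ae_of_all _ fun z => by simp [ENNReal.ofReal_eq_zero, not_le, hp_pos z])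
      (ae_of_all _ fun z => ENNReal.ofReal_ne_top)).symm
  have hPinv : Measurable ((fun z => ENNReal.ofReal (p z))⁻¹) := hPm.inv
  have hμνR : μ.prod ν = R.withDensity
      ((fun z => ENNReal.ofReal (p z))⁻¹ * fun z => μ.rnDeriv m z.1 * ν.rnDeriv m z.2) := by
    rw [withDensity_mul _ hPinv hFm, ← hm2', ← hprodeq]
  have hπR : π ≪ R := hπac.trans (by rw [hμνR]; exact withDensity_absolutelyContinuous _ _)
  have h1 : (μ.prod ν).rnDeriv R =ᵐ[R]
      ((fun z => ENNReal.ofReal (p z))⁻¹ * fun z => μ.rnDeriv m z.1 * ν.rnDeriv m z.2) := by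
    rw [hμνR]; exact Measure.rnDeriv_withDensity R (hPinv.mul hFm)
  have hchain : ∀ᵐ z ∂π, π.rnDeriv R z
      = π.rnDeriv (μ.prod ν) z * ((ENNReal.ofReal (p z))⁻¹ * (μ.rnDeriv m z.1 * ν.rnDeriv m z.2)) := by
    have h2 := Measure.rnDeriv_mul_rnDeriv (κ := R) hπac
    filter_upwards [hπR.ae_le h2, hπR.ae_le h1] with z hz2 hz1
    rw [← hz2, Pi.mul_apply, hz1, Pi.mul_apply, Pi.inv_apply]
  -- positivity and finiteness statements
  have hh_pos : ∀ᵐ z ∂π, 0 < π.rnDeriv (μ.prod ν) z := Measure.rnDeriv_pos hπac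
  have hh_fin : ∀ᵐ z ∂π, π.rnDeriv (μ.prod ν) z ≠ ⊤ :=
    hπac.ae_le (Measure.rnDeriv_ne_top π (μ.prod ν))
  have hfa : ∀ᵐ z ∂π, 0 < μ.rnDeriv m z.1 ∧ μ.rnDeriv m z.1 ≠ ⊤ := by
    have h1 : ∀ᵐ x ∂μ, 0 < μ.rnDeriv m x ∧ μ.rnDeriv m x ≠ ⊤ :=
      (Measure.rnDeriv_pos hμac).and (hμac.ae_le (Measure.rnDeriv_ne_top μ m))
    revert hfm h1
    generalize μ.rnDeriv m = f0
    intro hfm h1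
    rw [← hπ1] at h1
    exact (ae_map_iff measurable_fst.aemeasurable
      ((measurableSet_lt measurable_const hfm).inter
        (hfm (measurableSet_singleton ⊤)).compl)).mp h1
  have hga : ∀ᵐ z ∂π, 0 < ν.rnDeriv m z.2 ∧ ν.rnDeriv m z.2 ≠ ⊤ := by
    have h1 : ∀ᵐ y ∂ν, 0 < ν.rnDeriv m y ∧ ν.rnDeriv m y ≠ ⊤ :=
      (Measure.rnDeriv_pos hνac).and (hνac.ae_le (Measure.rnDeriv_ne_top ν m))
    revert hgm h1
    generalize ν.rnDeriv m = g0
    intro hgm h1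
    rw [← hπ2] at h1
    exact (ae_map_iff measurable_snd.aemeasurable
      ((measurableSet_lt measurable_const hgm).inter
        (hgm (measurableSet_singleton ⊤)).compl)).mp h1
  -- the a.e. log identity
  have hlog : (fun z => Real.log ((π.rnDeriv R z).toReal)) =ᵐ[π] fun z =>
      Real.log ((π.rnDeriv (μ.prod ν) z).toReal) + Real.log ((μ.rnDeriv m z.1).toReal)
        + Real.log ((ν.rnDeriv m z.2).toReal) - Real.log (p z) := by
    filter_upwards [hchain, hh_pos, hh_fin, hfa, hga] with z hz hhp hhf hf hg
    rw [hz, ENNReal.toReal_mul, ENNReal.toReal_mul, ENNReal.toReal_mul, ENNReal.toReal_inv,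
      ENNReal.toReal_ofReal (hp_pos z).le]
    have h1 : (π.rnDeriv (μ.prod ν) z).toReal ≠ 0 := (ENNReal.toReal_pos hhp.ne' hhf).ne'
    have h2 : (μ.rnDeriv m z.1).toReal ≠ 0 := (ENNReal.toReal_pos hf.1.ne' hf.2).ne'
    have h3 : (ν.rnDeriv m z.2).toReal ≠ 0 := (ENNReal.toReal_pos hg.1.ne' hg.2).ne'
    have h4 : (p z)⁻¹ ≠ 0 := inv_ne_zero (hp_pos z).ne'
    rw [Real.log_mul h1 (mul_ne_zero h4 (mul_ne_zero h2 h3)),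
      Real.log_mul h4 (mul_ne_zero h2 h3), Real.log_mul h2 h3, Real.log_inv]
    ring
  -- integrability facts
  have I2 : Integrable (fun z => Real.log ((μ.rnDeriv m z.1).toReal)) π := by
    revert hμent hfm
    generalize μ.rnDeriv m = f0
    intro hμent hfm
    rw [← hπ1] at hμent
    exact (integrable_map_measure (hfm.ennreal_toReal.log.aestronglyMeasurable)
      measurable_fst.aemeasurable).mp hμent
  have I3 : Integrable (fun z => Real.log ((ν.rnDeriv m z.2).toReal)) π := by
    revert hνent hgm
    generalize ν.rnDeriv m = g0
    intro hνent hgm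
    rw [← hπ2] at hνent
    exact (integrable_map_measure (hgm.ennreal_toReal.log.aestronglyMeasurable)
      measurable_snd.aemeasurable).mp hνent
  have J1 : Integrable (fun z :
      EuclideanSpace ℝ (Fin d) × EuclideanSpace ℝ (Fin d) => ‖z.1‖ ^ 2) π := by
    rw [← hπ1] at hμ2
    exact (integrable_map_measure ((continuous_norm.pow 2).aestronglyMeasurable)
      measurable_fst.aemeasurable).mp hμ2
  have J2 : Integrable (fun z :
      EuclideanSpace ℝ (Fin d) × EuclideanSpace ℝ (Fin d) => ‖z.2‖ ^ 2) π := by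
    rw [← hπ2] at hν2
    exact (integrable_map_measure ((continuous_norm.pow 2).aestronglyMeasurable)
      measurable_snd.aemeasurable).mp hν2
  have J3 : Integrable (fun z :
      EuclideanSpace ℝ (Fin d) × EuclideanSpace ℝ (Fin d) => (inner ℝ z.1 z.2 : ℝ)) π := by
    refine (J1.add J2).mono' continuous_inner.aestronglyMeasurable (ae_of_all _ fun z => ?_)
    have h5 := abs_real_inner_le_norm z.1 z.2
    have h6 : ‖z.1‖ * ‖z.2‖ ≤ ‖z.1‖ ^ 2 + ‖z.2‖ ^ 2 := by nlinarith [sq_nonneg (‖z.1‖ - ‖z.2‖)]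
    calc ‖(inner ℝ z.1 z.2 : ℝ)‖ = |(inner ℝ z.1 z.2 : ℝ)| := rfl
      _ ≤ ‖z.1‖ * ‖z.2‖ := h5
      _ ≤ _ := h6
  have Jq : Integrable (fun z :
      EuclideanSpace ℝ (Fin d) × EuclideanSpace ℝ (Fin d) =>
      ‖z.1‖ ^ 2 - 2 * Real.exp (κ * T) * (inner ℝ z.1 z.2 : ℝ) + ‖z.2‖ ^ 2) π :=
    (J1.sub (J3.const_mul (2 * Real.exp (κ * T)))).add J2
  have I4 : Integrable (fun z => Real.log (p z)) π := by
    have heq : (fun z :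
        EuclideanSpace ℝ (Fin d) × EuclideanSpace ℝ (Fin d) => Real.log (p z))
        = fun z => (-(d : ℝ) / 2) * Real.log (1 - Real.exp (-2 * κ * T))
          + (-κ / (2 * (s ^ 2 - 1)))
            * (‖z.1‖ ^ 2 - 2 * Real.exp (κ * T) * (inner ℝ z.1 z.2 : ℝ) + ‖z.2‖ ^ 2) := by
      funext z
      rw [hp_def]
      rw [Real.log_mul (Real.rpow_pos_of_pos hL _).ne' (Real.exp_ne_zero _),
        Real.log_rpow hL, Real.log_exp, he3]
      ring
    rw [heq]
    exact (integrable_const _).add (Jq.const_mul _)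
  -- the entropy decomposition
  have e1 : ∫ z, Real.log ((μ.rnDeriv m z.1).toReal) ∂π
      = ∫ x, Real.log ((μ.rnDeriv m x).toReal) ∂μ := by
    revert hfm
    generalize μ.rnDeriv m = f0
    intro hfm
    rw [← hπ1, integral_map measurable_fst.aemeasurable
      (hfm.ennreal_toReal.log.aestronglyMeasurable)]
  have e2 : ∫ z, Real.log ((ν.rnDeriv m z.2).toReal) ∂π
      = ∫ y, Real.log ((ν.rnDeriv m y).toReal) ∂ν := by
    revert hgm
    generalize ν.rnDeriv m = g0
    intro hgm
    rw [← hπ2, integral_map measurable_snd.aemeasurable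
      (hgm.ennreal_toReal.log.aestronglyMeasurable)]
  have hHR : ∫ z, Real.log ((π.rnDeriv R z).toReal) ∂π
      = (∫ z, Real.log ((π.rnDeriv (μ.prod ν) z).toReal) ∂π)
        + (∫ x, Real.log ((μ.rnDeriv m x).toReal) ∂μ)
        + (∫ y, Real.log ((ν.rnDeriv m y).toReal) ∂ν)
        - ∫ z, Real.log (p z) ∂π := by
    have IAB : Integrable (fun z => Real.log ((π.rnDeriv (μ.prod ν) z).toReal)
        + Real.log ((μ.rnDeriv m z.1).toReal)) π := hπent.add I2
    have IABC : Integrable (fun z => Real.log ((π.rnDeriv (μ.prod ν) z).toReal)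
        + Real.log ((μ.rnDeriv m z.1).toReal) + Real.log ((ν.rnDeriv m z.2).toReal)) π :=
      IAB.add I3
    rw [integral_congr_ae hlog, integral_sub IABC I4,
      integral_add IAB I3, integral_add hπent I2, e1, e2]
  -- value of ∫ log p dπ
  have hlogp : ∫ z, Real.log (p z) ∂π
      = (-(d : ℝ) / 2) * Real.log (1 - Real.exp (-2 * κ * T))
        + (-κ / (2 * (s ^ 2 - 1)))
          * ∫ z, (‖z.1‖ ^ 2 - 2 * Real.exp (κ * T) * (inner ℝ z.1 z.2 : ℝ) + ‖z.2‖ ^ 2) ∂π := by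
    have heq : (fun z :
        EuclideanSpace ℝ (Fin d) × EuclideanSpace ℝ (Fin d) => Real.log (p z))
        = fun z => (-(d : ℝ) / 2) * Real.log (1 - Real.exp (-2 * κ * T))
          + (-κ / (2 * (s ^ 2 - 1)))
            * (‖z.1‖ ^ 2 - 2 * Real.exp (κ * T) * (inner ℝ z.1 z.2 : ℝ) + ‖z.2‖ ^ 2) := by
      funext z
      rw [hp_def]
      rw [Real.log_mul (Real.rpow_pos_of_pos hL _).ne' (Real.exp_ne_zero _),
        Real.log_rpow hL, Real.log_exp, he3]
      ring
    rw [heq, integral_add (integrable_const _) (Jq.const_mul _), integral_const,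
      integral_const_mul]
    simp
  -- moment identities
  have e3 : ∫ x, ‖x‖ ^ 2 ∂μ = ∫ z, ‖z.1‖ ^ 2 ∂π := by
    rw [← hπ1, integral_map (f := fun x => ‖x‖ ^ 2) measurable_fst.aemeasurable
      ((continuous_norm.pow 2).aestronglyMeasurable)]
  have e4 : ∫ y, ‖y‖ ^ 2 ∂ν = ∫ z, ‖z.2‖ ^ 2 ∂π := by
    rw [← hπ2, integral_map (f := fun x => ‖x‖ ^ 2) measurable_snd.aemeasurable
      ((continuous_norm.pow 2).aestronglyMeasurable)]
  -- quadratic cost identity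
  have hpt : ∀ z : EuclideanSpace ℝ (Fin d) × EuclideanSpace ℝ (Fin d),
      ‖z.1 - z.2‖ ^ 2 = (ε * κ / (2 * (s ^ 2 - 1)))
          * (‖z.1‖ ^ 2 - 2 * Real.exp (κ * T) * (inner ℝ z.1 z.2 : ℝ) + ‖z.2‖ ^ 2)
        + (1 - s⁻¹) * (‖z.1‖ ^ 2 + ‖z.2‖ ^ 2) := fun z => by
    rw [norm_sub_sq_real, hc, ← hs_def]
    linear_combination (2 * (inner ℝ z.1 z.2 : ℝ)) * hss
  have hA : ∫ z, ‖z.1 - z.2‖ ^ 2 ∂π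
      = (ε * κ / (2 * (s ^ 2 - 1)))
          * ∫ z, (‖z.1‖ ^ 2 - 2 * Real.exp (κ * T) * (inner ℝ z.1 z.2 : ℝ) + ‖z.2‖ ^ 2) ∂π
        + (1 - s⁻¹) * ((∫ z, ‖z.1‖ ^ 2 ∂π) + ∫ z, ‖z.2‖ ^ 2 ∂π) := by
    have J12 : Integrable (fun z :
        EuclideanSpace ℝ (Fin d) × EuclideanSpace ℝ (Fin d) => ‖z.1‖ ^ 2 + ‖z.2‖ ^ 2) π :=
      J1.add J2
    simp_rw [hpt]
    rw [integral_add (Jq.const_mul _) (J12.const_mul _), integral_const_mul,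
      integral_const_mul, integral_add J1 J2]
  -- conclusion
  rw [hHR, hlogp, hA, e3, e4, he1]
  ring
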